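/- For every even integer k ≥ 2, lcm(A(2k,1), A'(2k,1)) = (1/2) F_{k+1} F_k L_{k+2} L_{k+1} L_{k−1}, where A(m,1) := ∑_{n=1}^{F_m − 1} ⌊φ n⌋ and A'(m,1) := ∑_{n=1}^{F_m − 1} ⌊φ² n⌋. -/

import Mathlib

open Real goldenRatio Nat

def lucas : ℕ → ℕ
  | 0 => 2
  | 1 => 1
  | n + 2 => lucas (n + 1) + lucas n

noncomputable def A (m : ℕ) : ℤ := ∑ n ∈ Finset.Icc 1 (Nat.fib m - 1), ⌊(1 + Real.sqrt 5) / 2 * (n : ℝ)⌋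

noncomputable def A' (m : ℕ) : ℤ :=
  ∑ n ∈ Finset.Icc 1 (Nat.fib m - 1), ⌊((1 + Real.sqrt 5) / 2) ^ 2 * (n : ℝ)⌋

lemma fib_mul_gold (m : ℕ) : (Nat.fib m : ℝ) * goldenRatio = Nat.fib (m+1) - goldenConj ^ m := by
  have := fib_succ_sub_goldenRatio_mul_fib m; linarith

lemma sqrt5_mul_fib (m : ℕ) : Real.sqrt 5 * Nat.fib m = goldenRatio ^ m - goldenConj ^ m := by
  rw [Real.coe_fib_eq]
  have h5 : Real.sqrt 5 ≠ 0 := by positivity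
  field_simp

lemma pair_floor (m n : ℕ) (hm : Even m) (h1 : 1 ≤ n) (h2 : n ≤ Nat.fib m - 1) :
    ⌊goldenRatio * (n:ℝ)⌋ + ⌊goldenRatio * ((Nat.fib m - n : ℕ):ℝ)⌋ = (Nat.fib (m+1) : ℤ) - 1 := by
  have hN2 : 2 ≤ Nat.fib m := by omega
  set ε : ℝ := goldenConj ^ m with hεdef
  have hε : 0 < ε := hm.pow_pos goldenConj_ne_zero
  have hεφ : goldenRatio ^ m * ε = 1 := by
    rw [hεdef, ← mul_pow, goldenRatio_mul_goldenConj, hm.neg_one_pow]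
  have hs5 : Real.sqrt 5 ^ 2 = 5 := Real.sq_sqrt (by norm_num)
  have hs5pos : (0:ℝ) < Real.sqrt 5 := by positivity
  have hs5gt : (1:ℝ) < Real.sqrt 5 := by nlinarith
  have hφpos : (0:ℝ) < goldenRatio := goldenRatio_pos
  have hψneg : goldenConj < 0 := goldenConj_neg
  have hn1 : (1:ℝ) ≤ (n:ℝ) := by exact_mod_cast h1
  set p : ℤ := ⌊goldenRatio * (n:ℝ)⌋ + 1 with hpdef
  have hplt : goldenRatio * (n:ℝ) < p := by
    push_cast [hpdef]; exact Int.lt_floor_add_one _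
  have hple : (p:ℝ) ≤ goldenRatio * (n:ℝ) + 1 := by
    push_cast [hpdef]
    have := Int.floor_le (goldenRatio * (n:ℝ)); linarith
  have hfl_le : (⌊goldenRatio * (n:ℝ)⌋ : ℝ) ≤ goldenRatio * (n:ℝ) := Int.floor_le _
  set q : ℤ := p^2 - p * n - (n:ℤ)^2 with hqdef
  have hq : (q:ℝ) = ((p:ℝ) - goldenRatio * n) * ((p:ℝ) - goldenConj * n) := by
    push_cast [hqdef]
    linear_combination ((p:ℝ)*(n:ℝ)) * goldenRatio_add_goldenConj + (n:ℝ)^2 * goldenRatio_mul_goldenConj + (n:ℝ)^2/2 * hs5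
  have hBpos : (0:ℝ) < (p:ℝ) - goldenConj * n := by nlinarith
  have hqne : q ≠ 0 := by
    intro h
    have h0 : ((p:ℝ) - goldenRatio * n) * ((p:ℝ) - goldenConj * n) = 0 := by
      rw [← hq, h]; norm_num
    rcases mul_eq_zero.mp h0 with h' | h'
    · have hnne : (n:ℝ) ≠ 0 := by positivity
      exact goldenRatio_irrational ⟨(p:ℚ)/(n:ℚ), by push_cast; field_simp at h' ⊢; linarith⟩
    · exact absurd h' (by nlinarith)
  have hq1 : (1:ℝ) ≤ (q:ℝ) := by
    have : 0 < q := by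
      have : (0:ℝ) < (q:ℝ) := by rw [hq]; exact mul_pos (by linarith) hBpos
      exact_mod_cast this
    exact_mod_cast this
  have hcast : ((Nat.fib m - 1 : ℕ):ℝ) = (Nat.fib m : ℝ) - 1 := by
    push_cast [Nat.cast_sub (by omega : 1 ≤ Nat.fib m)]; ring
  have hnle : (n:ℝ) ≤ (Nat.fib m : ℝ) - 1 := by
    rw [← hcast]; exact_mod_cast h2
  have hBlt : (p:ℝ) - goldenConj * n < goldenRatio ^ m := by
    have h1' : (p:ℝ) - goldenConj * n ≤ Real.sqrt 5 * n + 1 := by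
      have := goldenRatio_sub_goldenConj; nlinarith
    have h2' : Real.sqrt 5 * n + 1 < goldenRatio ^ m := by
      have h3' := sqrt5_mul_fib m
      nlinarith
    linarith
  have hkey : goldenRatio * n + ε < p := by
    have hABge : (1:ℝ) ≤ ((p:ℝ) - goldenRatio * n) * ((p:ℝ) - goldenConj * n) := by
      rw [← hq]; exact hq1
    nlinarith [mul_pos hε hBpos, mul_lt_mul_of_pos_left hBlt hε]
  have hcast2 : ((Nat.fib m - n : ℕ):ℝ) = (Nat.fib m : ℝ) - n := by
    push_cast [Nat.cast_sub (by omega : n ≤ Nat.fib m)]; ring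
  have hval : goldenRatio * ((Nat.fib m - n : ℕ):ℝ)
      = (Nat.fib (m+1) : ℝ) - ε - goldenRatio * n := by
    rw [hcast2, mul_sub, mul_comm goldenRatio ((Nat.fib m : ℝ))]
    rw [fib_mul_gold m]
  have hfloor2 : ⌊goldenRatio * ((Nat.fib m - n : ℕ):ℝ)⌋
      = (Nat.fib (m+1) : ℤ) - 1 - ⌊goldenRatio * (n:ℝ)⌋ := by
    rw [Int.floor_eq_iff]
    rw [hval]; push_cast [hpdef] at hkey ⊢
    constructor
    · linarith
    · linarith
  omega

lemma two_A (m : ℕ) (hm : Even m) (hN : 1 ≤ Nat.fib m) :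
    2 * A m = ((Nat.fib m : ℤ) - 1) * ((Nat.fib (m+1) : ℤ) - 1) := by
  have hA : A m = ∑ i ∈ Finset.range (Nat.fib m - 1), ⌊goldenRatio * ((1 + i : ℕ):ℝ)⌋ := by
    rw [A, ← Finset.Ico_add_one_right_eq_Icc, Finset.sum_Ico_eq_sum_range]
    simp [Nat.add_sub_cancel]
  have hA2 : A m = ∑ i ∈ Finset.range (Nat.fib m - 1), ⌊goldenRatio * ((Nat.fib m - (1 + i) : ℕ):ℝ)⌋ := by
    rw [hA, ← Finset.sum_range_reflect]
    apply Finset.sum_congr rfl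
    intro i hi
    simp only [Finset.mem_range] at hi
    congr 2
    exact Nat.cast_inj.mpr (by omega)
  have : 2 * A m = ∑ i ∈ Finset.range (Nat.fib m - 1), ((Nat.fib (m+1) : ℤ) - 1) := by
    rw [two_mul]
    nth_rewrite 1 [hA]
    rw [hA2, ← Finset.sum_add_distrib]
    apply Finset.sum_congr rfl
    intro i hi
    simp only [Finset.mem_range] at hi
    exact pair_floor m (1+i) hm (by omega) (by omega)
  rw [this, Finset.sum_const, Finset.card_range, nsmul_eq_mul]
  congr 1
  push_cast [Nat.cast_sub hN]
  ring

lemma A'_eq (m : ℕ) (hN : 1 ≤ Nat.fib m) :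
    2 * A' m = 2 * A m + ((Nat.fib m : ℤ) - 1) * (Nat.fib m : ℤ) := by
  have h1 : A' m = A m + ∑ n ∈ Finset.Icc 1 (Nat.fib m - 1), (n : ℤ) := by
    rw [A', A, ← Finset.sum_add_distrib]
    apply Finset.sum_congr rfl
    intro n _
    have : ((1 + Real.sqrt 5) / 2) ^ 2 * (n:ℝ) = (1 + Real.sqrt 5)/2 * (n:ℝ) + (n:ℕ) := by
      push_cast
      linear_combination (n:ℝ) * goldenRatio_sq
    rw [this, Int.floor_add_natCast]
  have h5 : (∑ n ∈ Finset.Icc 1 (Nat.fib m - 1), (n:ℤ)) * 2 = ((Nat.fib m : ℤ) - 1) * (Nat.fib m : ℤ) := by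
    by_cases hN2 : Nat.fib m ≤ 1
    · have : Nat.fib m = 1 := by omega
      simp [this]
    · have hN2' : 2 ≤ Nat.fib m := by omega
      have e1 : ∑ n ∈ Finset.Icc 1 (Nat.fib m - 1), (n:ℤ)
          = ∑ i ∈ Finset.range (Nat.fib m - 1), ((1:ℤ)+(i:ℤ)) := by
        rw [← Finset.Ico_add_one_right_eq_Icc, Finset.sum_Ico_eq_sum_range]
        simp
      rw [e1, Finset.sum_add_distrib, Finset.sum_const, Finset.card_range, nsmul_eq_mul]
      have e2 : ∑ i ∈ Finset.range (Nat.fib m - 1), (i:ℤ)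
          = (((∑ i ∈ Finset.range (Nat.fib m - 1), i) : ℕ) : ℤ) := by push_cast; rfl
      have e3 := Finset.sum_range_id_mul_two (Nat.fib m - 1)
      have e4 : (((∑ i ∈ Finset.range (Nat.fib m - 1), i) : ℕ) : ℤ) * 2
          = ((Nat.fib m : ℤ) - 1) * ((Nat.fib m : ℤ) - 2) := by
        rw [show ((2:ℤ)) = ((2:ℕ):ℤ) from rfl, ← Nat.cast_mul, e3]
        push_cast [Nat.cast_sub (by omega : 1 ≤ Nat.fib m), Nat.cast_sub (by omega : 1 ≤ Nat.fib m - 1)]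
        ring
      rw [e2]
      push_cast [Nat.cast_sub (by omega : 1 ≤ Nat.fib m)]
      push_cast at e4
      nlinarith [e4]
  linarith [h5, h1]

lemma lucasZ : ∀ n, (lucas n : ℤ) = 2 * Nat.fib (n+1) - Nat.fib n := by
  intro n
  induction n using Nat.twoStepInduction with
  | zero => simp [lucas]
  | one => simp [lucas]
  | more n ih1 ih2 =>
    rw [show n+2 = n+1+1 from rfl, lucas, Nat.fib_add_two (n := n+1), Nat.fib_add_two (n := n)]
    simp only [show n+1+1 = n+2 by omega, Nat.fib_add_two (n := n)] at ih2
    push_cast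
    push_cast at ih1 ih2
    linarith

lemma cassini : ∀ n, ((Nat.fib (n+1) : ℤ))^2 - Nat.fib (n+1) * Nat.fib n - (Nat.fib n)^2 = (-1)^n := by
  intro n
  induction n with
  | zero => simp
  | succ n ih =>
    rw [Nat.fib_add_two]
    push_cast
    push_cast at ih
    ring_nf
    ring_nf at ih
    linarith [ih]

lemma coprime_lucas : ∀ n, Nat.Coprime (lucas n) (lucas (n+1)) := by
  intro n
  induction n with
  | zero => decide
  | succ n ih =>
    rw [show n+1+1 = n+2 from rfl, lucas]
    simpa [Nat.coprime_add_self_right] using ih.symm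

lemma lucas_even {n : ℕ} (h : 2 ∣ Nat.fib n) : 2 ∣ lucas n := by
  have h2 : (2:ℤ) ∣ (lucas n : ℤ) := by
    obtain ⟨c, hc⟩ := h
    rw [lucasZ]
    refine ⟨Nat.fib (n+1) - c, ?_⟩
    push_cast [hc]
    ring
  exact_mod_cast h2

theorem lcm_A_even (k : ℕ) (hk : 2 ≤ k) (hke : Even k) :
    (Int.lcm (A (2 * k)) (A' (2 * k)) : ℝ) =
      (1 / 2) * (Nat.fib (k + 1) : ℝ) * (Nat.fib k : ℝ) * (lucas (k + 2) : ℝ) *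
        (lucas (k + 1) : ℝ) * (lucas (k - 1) : ℝ) := by
  have hm : Even (2*k) := even_two_mul k
  have hN : 1 ≤ Nat.fib (2*k) := Nat.fib_pos.mpr (by omega)
  have hA2 := two_A (2*k) hm hN
  have hA'2 : 2 * A' (2*k) = ((Nat.fib (2*k) : ℤ) - 1) * ((Nat.fib (2*k+2) : ℤ) - 1) := by
    rw [A'_eq _ hN, hA2, show 2*k+2 = (2*k)+2 from rfl, Nat.fib_add_two]
    push_cast
    ring
  -- algebraic identities
  set x : ℤ := (Nat.fib k : ℤ) with hx
  set y : ℤ := (Nat.fib (k+1) : ℤ) with hy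
  have hc : y^2 - y*x - x^2 = 1 := by
    rw [hx, hy, cassini k, hke.neg_one_pow]
  have hfk1 : (Nat.fib (k-1) : ℤ) = y - x := by
    have h := Nat.fib_add_two (n := k-1)
    rw [show k-1+2 = k+1 by omega, show k-1+1 = k by omega] at h
    rw [hy, h]; push_cast; ring
  have hfk2 : (Nat.fib (k+2) : ℤ) = x + y := by rw [Nat.fib_add_two]; push_cast; ring
  have hfk3 : (Nat.fib (k+3) : ℤ) = x + 2*y := by
    rw [show k+3 = (k+1)+2 by ring, Nat.fib_add_two, Nat.fib_add_two]; push_cast; ring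
  have hl1 : (lucas (k-1) : ℤ) = 3*x - y := by
    rw [lucasZ, show k-1+1 = k by omega, hfk1]; ring
  have hl2 : (lucas (k+1) : ℤ) = 2*x + y := by
    rw [lucasZ, show k+1+1 = k+2 by ring, hfk2]; ring
  have hl3 : (lucas (k+2) : ℤ) = x + 3*y := by
    rw [lucasZ, show k+2+1 = k+3 by ring, hfk3, hfk2]; ring
  have hf2k : (Nat.fib (2*k) : ℤ) = x * (2*y - x) := by
    rw [Nat.fib_two_mul]
    push_cast [Nat.cast_sub (by
      have := Nat.fib_le_fib_succ (n := k); omega : Nat.fib k ≤ 2 * Nat.fib (k+1))]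
    ring
  have hf2k1 : (Nat.fib (2*k+1) : ℤ) = y^2 + x^2 := by
    rw [Nat.fib_two_mul_add_one]; push_cast; ring
  have hf2k2 : (Nat.fib (2*k+2) : ℤ) = y * (2*x + y) := by
    rw [show 2*k+2 = 2*(k+1) by ring, Nat.fib_two_mul]
    rw [show (k+1)+1 = k+2 by ring]
    push_cast [Nat.cast_sub (by
      have := Nat.fib_le_fib_succ (n := k+1); omega : Nat.fib (k+1) ≤ 2 * Nat.fib (k+2)), hfk2]
    ring
  have e1 : (Nat.fib (2*k) : ℤ) - 1 = (Nat.fib (k+1) : ℤ) * (lucas (k-1) : ℤ) := by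
    rw [hf2k, hl1, ← hy]; linear_combination hc
  have e2 : (Nat.fib (2*k+1) : ℤ) - 1 = (Nat.fib k : ℤ) * (lucas (k+1) : ℤ) := by
    rw [hf2k1, hl2, ← hx]; linear_combination hc
  have e3 : (Nat.fib (2*k+2) : ℤ) - 1 = (Nat.fib k : ℤ) * (lucas (k+2) : ℤ) := by
    rw [hf2k2, hl3, ← hx]; linear_combination hc
  -- evenness
  have hdvd : 2 ∣ Nat.fib (k+1) * lucas (k-1) * Nat.fib k := by
    have hfib3 : Nat.fib 3 = 2 := by decide
    rcases (by omega : 3 ∣ k ∨ 3 ∣ (k+1) ∨ 3 ∣ (k-1)) with h | h | h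
    · have h2 : 2 ∣ Nat.fib k := hfib3 ▸ Nat.fib_dvd 3 k h
      exact h2.mul_left _
    · have h2 : 2 ∣ Nat.fib (k+1) := hfib3 ▸ Nat.fib_dvd 3 (k+1) h
      exact (h2.mul_right _).mul_right _
    · have h2 : 2 ∣ lucas (k-1) := lucas_even (hfib3 ▸ Nat.fib_dvd 3 (k-1) h)
      exact (h2.mul_left _).mul_right _
  obtain ⟨b, hb⟩ := hdvd
  have hbZ : (Nat.fib (k+1) : ℤ) * (lucas (k-1) : ℤ) * (Nat.fib k : ℤ) = 2 * b := by
    exact_mod_cast congrArg (Nat.cast : ℕ → ℤ) hb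
  have hAb : A (2*k) = ((b * lucas (k+1) : ℕ) : ℤ) := by
    apply mul_left_cancel₀ (two_ne_zero (α := ℤ))
    rw [hA2, e1, e2]
    push_cast
    push_cast at hbZ
    linear_combination (lucas (k+1) : ℤ) * hbZ
  have hA'b : A' (2*k) = ((b * lucas (k+2) : ℕ) : ℤ) := by
    apply mul_left_cancel₀ (two_ne_zero (α := ℤ))
    rw [hA'2, e1, e3]
    push_cast
    push_cast at hbZ
    linear_combination (lucas (k+2) : ℤ) * hbZ
  rw [hAb, hA'b]
  have hlcm : Int.lcm ((b * lucas (k+1) : ℕ) : ℤ) ((b * lucas (k+2) : ℕ) : ℤ)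
      = b * (lucas (k+1) * lucas (k+2)) := by
    have h1 : Int.lcm ((b * lucas (k+1) : ℕ) : ℤ) ((b * lucas (k+2) : ℕ) : ℤ)
        = Nat.lcm (b * lucas (k+1)) (b * lucas (k+2)) := by simp [Int.lcm, Int.natAbs_mul]
    rw [h1, Nat.lcm_mul_left, (coprime_lucas (k+1)).lcm_eq_mul]
  rw [hlcm]
  have hbR : (Nat.fib (k+1) : ℝ) * (lucas (k-1) : ℝ) * (Nat.fib k : ℝ) = 2 * b := by
    exact_mod_cast congrArg (Nat.cast : ℕ → ℝ) hb
  push_cast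
  linear_combination (-(lucas (k+1) : ℝ) * (lucas (k+2) : ℝ) / 2) * hbR
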